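/- For the random variable X = k on A'_{n,k}, X = −k on A''_{n,k}, with μ(A'_{n,k}) = μ(A''_{n,k}) = c·2^{-n} e^{-k}/(k log²k), the conditional expectation X_n = E(X | F_n) equals X·1_{C_n} where C_n = ∪_{m≥n} B_m, and for every λ > 1, E(e^{λ|X_n|}) = ∞. -/

import Mathlib

open MeasureTheory Filter Finset
open scoped ENNReal Topology

/-- For the concrete counterexample: `X = k` on `A'_{n,k}`, `X = -k` on `A''_{n,k}`,
with `μ(A'_{n,k}) = μ(A''_{n,k}) = c · 2^{-n} e^{-k}/(k log² k)`, the conditional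
expectation `X_n = E(X|F_n)` equals `X · 1_{C_n}` a.e. (where `C_n = ∪_{m≥n} B_m`),
and for every `λ > 1`, `E(e^{λ|X_n|}) = ∞`. -/
theorem orlicz_counterexample_condexp_and_divergence
    {Ω : Type*} {m0 : MeasurableSpace Ω} {μ : Measure Ω} [IsProbabilityMeasure μ]
    (A' A'' : ℕ → ℕ → Set Ω) (c : ℝ) (hc : 0 < c)
    (hmeas' : ∀ n k, MeasurableSet (A' n k))
    (hmeas'' : ∀ n k, MeasurableSet (A'' n k))
    (hdisj' : ∀ n k n' k', (n, k) ≠ (n', k') → Disjoint (A' n k) (A' n' k'))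
    (hdisj'' : ∀ n k n' k', (n, k) ≠ (n', k') → Disjoint (A'' n k) (A'' n' k'))
    (hdisj : ∀ n k n' k', Disjoint (A' n k) (A'' n' k'))
    (hμ' : ∀ n k, 1 ≤ n → 2 ≤ k →
      μ (A' n k) = ENNReal.ofReal
        (c * (1 / 2) ^ n * Real.exp (-(k : ℝ)) / (k * (Real.log k) ^ 2)))
    (hμ'' : ∀ n k, 1 ≤ n → 2 ≤ k →
      μ (A'' n k) = ENNReal.ofReal
        (c * (1 / 2) ^ n * Real.exp (-(k : ℝ)) / (k * (Real.log k) ^ 2)))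
    (hcover : (⋃ (n : ℕ) (_ : 1 ≤ n) (k : ℕ) (_ : 2 ≤ k), A' n k ∪ A'' n k) = Set.univ)
    (X : Ω → ℝ)
    (hX' : ∀ n k, 1 ≤ n → 2 ≤ k → ∀ ω ∈ A' n k, X ω = (k : ℝ))
    (hX'' : ∀ n k, 1 ≤ n → 2 ≤ k → ∀ ω ∈ A'' n k, X ω = -(k : ℝ))
    (B : ℕ → Set Ω) (hB : ∀ m, B m = ⋃ (k : ℕ) (_ : 2 ≤ k), A' m k ∪ A'' m k)
    (C : ℕ → Set Ω) (hC : ∀ n, C n = ⋃ (m : ℕ) (_ : n ≤ m), B m)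
    (F : ℕ → MeasurableSpace Ω)
    (hF : ∀ n, F n = MeasurableSpace.generateFrom
      ({S | ∃ m, n ≤ m ∧ ∃ k, 2 ≤ k ∧ (S = A' m k ∨ S = A'' m k)} ∪ {(C n)ᶜ})) :
    ∀ n, 1 ≤ n →
      (μ[X | F n] =ᵐ[μ] (C n).indicator X) ∧
      ∀ l : ℝ, 1 < l →
        ∫⁻ ω, ENNReal.ofReal (Real.exp (l * |(C n).indicator X ω|)) ∂μ = ⊤ := by
  -- Sets outside the valid index range are empty.
  have hemp' : ∀ p q : ℕ, ¬(1 ≤ p ∧ 2 ≤ q) → A' p q = ∅ := by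
    intro p q hpq
    ext ω
    simp only [Set.mem_empty_iff_false, iff_false]
    intro hω
    have hmem : ω ∈ (⋃ (n : ℕ) (_ : 1 ≤ n) (k : ℕ) (_ : 2 ≤ k), A' n k ∪ A'' n k) := by
      rw [hcover]; trivial
    simp only [Set.mem_iUnion] at hmem
    obtain ⟨m, hm, k, hk, hmk⟩ := hmem
    have hne : (p, q) ≠ (m, k) := by
      intro h
      rw [Prod.mk.injEq] at h
      exact hpq ⟨by rw [h.1]; exact hm, by rw [h.2]; exact hk⟩
    rcases hmk with h1 | h1
    · exact Set.disjoint_left.mp (hdisj' p q m k hne) hω h1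
    · exact Set.disjoint_left.mp (hdisj p q m k) hω h1
  have hemp'' : ∀ p q : ℕ, ¬(1 ≤ p ∧ 2 ≤ q) → A'' p q = ∅ := by
    intro p q hpq
    ext ω
    simp only [Set.mem_empty_iff_false, iff_false]
    intro hω
    have hmem : ω ∈ (⋃ (n : ℕ) (_ : 1 ≤ n) (k : ℕ) (_ : 2 ≤ k), A' n k ∪ A'' n k) := by
      rw [hcover]; trivial
    simp only [Set.mem_iUnion] at hmem
    obtain ⟨m, hm, k, hk, hmk⟩ := hmem
    have hne : (p, q) ≠ (m, k) := by
      intro h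
      rw [Prod.mk.injEq] at h
      exact hpq ⟨by rw [h.1]; exact hm, by rw [h.2]; exact hk⟩
    rcases hmk with h1 | h1
    · exact Set.disjoint_left.mp (hdisj m k p q).symm hω h1
    · exact Set.disjoint_left.mp (hdisj'' p q m k hne) hω h1
  -- Every point has a representation.
  have hrep : ∀ ω : Ω, ∃ p q : ℕ, 1 ≤ p ∧ 2 ≤ q ∧ (ω ∈ A' p q ∨ ω ∈ A'' p q) := by
    intro ω
    have hmem : ω ∈ (⋃ (n : ℕ) (_ : 1 ≤ n) (k : ℕ) (_ : 2 ≤ k), A' n k ∪ A'' n k) := by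
      rw [hcover]; trivial
    simp only [Set.mem_iUnion] at hmem
    obtain ⟨m, hm, k, hk, hmk⟩ := hmem
    exact ⟨m, k, hm, hk, hmk⟩
  -- The elementary "term" functions.
  set term : ℕ × ℕ → Ω → ℝ := fun b ω =>
    (A' b.1 b.2).indicator (fun _ => (b.2 : ℝ)) ω
      + (A'' b.1 b.2).indicator (fun _ => -(b.2 : ℝ)) ω with hterm_def
  have hterm_ne : ∀ (ω : Ω) (p q : ℕ), (ω ∈ A' p q ∨ ω ∈ A'' p q) →
      ∀ b : ℕ × ℕ, b ≠ (p, q) → term b ω = 0 := by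
    intro ω p q hmem b hb
    have hb' : (b.1, b.2) ≠ (p, q) := by simpa using hb
    have h1 : ω ∉ A' b.1 b.2 := by
      intro h
      rcases hmem with h' | h'
      · exact Set.disjoint_left.mp (hdisj' b.1 b.2 p q hb') h h'
      · exact Set.disjoint_left.mp (hdisj b.1 b.2 p q) h h'
    have h2 : ω ∉ A'' b.1 b.2 := by
      intro h
      rcases hmem with h' | h'
      · exact Set.disjoint_left.mp (hdisj p q b.1 b.2).symm h h'
      · exact Set.disjoint_left.mp (hdisj'' b.1 b.2 p q hb') h h'
    simp [hterm_def, Set.indicator_of_notMem, h1, h2]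
  have hterm_eq : ∀ (ω : Ω) (p q : ℕ), 1 ≤ p → 2 ≤ q →
      (ω ∈ A' p q ∨ ω ∈ A'' p q) → term (p, q) ω = X ω := by
    intro ω p q hp hq hmem
    rcases hmem with h' | h'
    · have h2 : ω ∉ A'' p q := fun h => Set.disjoint_left.mp (hdisj p q p q) h' h
      simp [hterm_def, Set.indicator_of_mem h', Set.indicator_of_notMem h2,
        hX' p q hp hq ω h']
    · have h1 : ω ∉ A' p q := fun h => Set.disjoint_left.mp (hdisj p q p q) h h'
      simp [hterm_def, Set.indicator_of_mem h', Set.indicator_of_notMem h1,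
        hX'' p q hp hq ω h']
  have hterm_meas : ∀ b : ℕ × ℕ, Measurable (term b) := by
    intro b
    exact (measurable_const.indicator (hmeas' b.1 b.2)).add
      (measurable_const.indicator (hmeas'' b.1 b.2))
  -- X is measurable.
  have hXmeas : Measurable X := by
    apply measurable_of_tendsto_metrizable
      (f := fun N ω => ∑ b ∈ Finset.range N ×ˢ Finset.range N, term b ω)
    · intro N
      exact Finset.measurable_sum _ (fun b _ => hterm_meas b)
    · rw [tendsto_pi_nhds]
      intro ω
      obtain ⟨p, q, hp, hq, hmem⟩ := hrep ω
      have hev : ∀ N, max p q < N →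
          ∑ b ∈ Finset.range N ×ˢ Finset.range N, term b ω = X ω := by
        intro N hN
        rw [Finset.sum_eq_single (p, q)]
        · exact hterm_eq ω p q hp hq hmem
        · intro b _ hb
          exact hterm_ne ω p q hmem b hb
        · intro hcon
          exact absurd (Finset.mem_product.mpr
            ⟨Finset.mem_range.mpr (lt_of_le_of_lt (le_max_left p q) hN),
             Finset.mem_range.mpr (lt_of_le_of_lt (le_max_right p q) hN)⟩) hcon
      refine Tendsto.congr' ?_ (tendsto_const_nhds (x := X ω))
      filter_upwards [eventually_gt_atTop (max p q)] with N hN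
      exact (hev N hN).symm
  -- X is integrable.
  have hlog2 : (0 : ℝ) < Real.log 2 := Real.log_pos (by norm_num)
  have hXint : Integrable X μ := by
    refine ⟨hXmeas.aestronglyMeasurable, ?_⟩
    have hptwise : ∀ ω, (‖X ω‖₊ : ℝ≥0∞) ≤
        ∑' b : ℕ × ℕ, (A' b.1 b.2 ∪ A'' b.1 b.2).indicator (fun _ => ((b.2 : ℝ≥0∞))) ω := by
      intro ω
      obtain ⟨p, q, hp, hq, hmem⟩ := hrep ω
      have hval : (‖X ω‖₊ : ℝ≥0∞) =
          (A' p q ∪ A'' p q).indicator (fun _ => ((q : ℝ≥0∞))) ω := by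
        have hmemU : ω ∈ A' p q ∪ A'' p q := (Set.mem_union ω _ _).mpr hmem
        rw [Set.indicator_of_mem hmemU]
        rcases hmem with h' | h'
        · rw [hX' p q hp hq ω h']
          simp [Real.nnnorm_natCast]
        · rw [hX'' p q hp hq ω h']
          simp [Real.nnnorm_natCast]
      rw [hval]
      exact ENNReal.le_tsum (p, q)
    have hKpos : (0 : ℝ) < 2 * c / (Real.log 2) ^ 2 := by positivity
    set K : ℝ := 2 * c / (Real.log 2) ^ 2 with hK_def
    have hbound : ∀ b : ℕ × ℕ,
        ((b.2 : ℝ≥0∞)) * μ (A' b.1 b.2 ∪ A'' b.1 b.2) ≤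
          ENNReal.ofReal K * ENNReal.ofReal (1/2) ^ b.1 * ENNReal.ofReal (Real.exp (-1)) ^ b.2 := by
      intro ⟨m, k⟩
      by_cases hv : 1 ≤ m ∧ 2 ≤ k
      · obtain ⟨hm, hk⟩ := hv
        have hkR : (2 : ℝ) ≤ (k : ℝ) := by exact_mod_cast hk
        have hk0 : (0 : ℝ) < (k : ℝ) := by linarith
        have hlogk : (0 : ℝ) < Real.log k :=
          Real.log_pos (by linarith)
        set v : ℝ := c * (1 / 2) ^ m * Real.exp (-(k : ℝ)) / ((k : ℝ) * (Real.log k) ^ 2)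
          with hv_def
        have hv0 : 0 ≤ v := by positivity
        have hμu : μ (A' m k ∪ A'' m k) ≤ ENNReal.ofReal (2 * v) := by
          refine le_trans (measure_union_le _ _) ?_
          rw [hμ' m k hm hk, hμ'' m k hm hk, ← ENNReal.ofReal_add hv0 hv0]
          exact le_of_eq (by rw [two_mul])
        calc ((k : ℝ≥0∞)) * μ (A' m k ∪ A'' m k)
            ≤ ENNReal.ofReal (k : ℝ) * ENNReal.ofReal (2 * v) := by
              refine mul_le_mul' (le_of_eq ?_) hμu
              simp [ENNReal.ofReal_natCast]
          _ = ENNReal.ofReal ((k : ℝ) * (2 * v)) := by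
              rw [ENNReal.ofReal_mul (le_of_lt hk0)]
          _ ≤ ENNReal.ofReal (K * ((1/2) ^ m * Real.exp (-(k : ℝ)))) := by
              apply ENNReal.ofReal_le_ofReal
              have heq : (k : ℝ) * (2 * v) =
                  (2 * c * ((1/2) ^ m * Real.exp (-(k : ℝ)))) / (Real.log k) ^ 2 := by
                rw [hv_def]
                field_simp
              rw [heq, hK_def]
              rw [div_mul_eq_mul_div]
              apply div_le_div_of_nonneg_left _ (by positivity)
              · exact pow_le_pow_left₀ (le_of_lt hlog2)
                  (Real.log_le_log (by norm_num) hkR) 2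
              · positivity
          _ = ENNReal.ofReal K * ENNReal.ofReal (1/2) ^ m
                * ENNReal.ofReal (Real.exp (-1)) ^ k := by
              rw [ENNReal.ofReal_mul (le_of_lt hKpos), ENNReal.ofReal_mul (by norm_num),
                ← ENNReal.ofReal_pow (by norm_num : (0:ℝ) ≤ 1/2),
                ← ENNReal.ofReal_pow (Real.exp_nonneg _), ← Real.exp_nat_mul]
              ring_nf
      · have h1 : A' m k = ∅ := hemp' m k hv
        have h2 : A'' m k = ∅ := hemp'' m k hv
        simp [h1, h2]
    have hW : (∫⁻ ω, (‖X ω‖₊ : ℝ≥0∞) ∂μ) ≤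
        ENNReal.ofReal K * (1 - ENNReal.ofReal (Real.exp (-1)))⁻¹
          * (1 - ENNReal.ofReal (1/2))⁻¹ := by
      calc (∫⁻ ω, (‖X ω‖₊ : ℝ≥0∞) ∂μ)
          ≤ ∫⁻ ω, ∑' b : ℕ × ℕ,
              (A' b.1 b.2 ∪ A'' b.1 b.2).indicator (fun _ => ((b.2 : ℝ≥0∞))) ω ∂μ :=
            lintegral_mono hptwise
        _ = ∑' b : ℕ × ℕ, ∫⁻ ω,
              (A' b.1 b.2 ∪ A'' b.1 b.2).indicator (fun _ => ((b.2 : ℝ≥0∞))) ω ∂μ :=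
            lintegral_tsum (fun b => (measurable_const.indicator
              ((hmeas' b.1 b.2).union (hmeas'' b.1 b.2))).aemeasurable)
        _ = ∑' b : ℕ × ℕ, ((b.2 : ℝ≥0∞)) * μ (A' b.1 b.2 ∪ A'' b.1 b.2) := by
            refine tsum_congr fun b => ?_
            rw [lintegral_indicator ((hmeas' b.1 b.2).union (hmeas'' b.1 b.2)),
              setLIntegral_const]
        _ ≤ ∑' b : ℕ × ℕ, ENNReal.ofReal K * ENNReal.ofReal (1/2) ^ b.1
              * ENNReal.ofReal (Real.exp (-1)) ^ b.2 :=
            ENNReal.tsum_le_tsum hbound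
        _ = ENNReal.ofReal K * (1 - ENNReal.ofReal (Real.exp (-1)))⁻¹
              * (1 - ENNReal.ofReal (1/2))⁻¹ := by
            rw [ENNReal.tsum_prod (f := fun m k => ENNReal.ofReal K * ENNReal.ofReal (1/2) ^ m
                * ENNReal.ofReal (Real.exp (-1)) ^ k)]
            have inner : ∀ m : ℕ, (∑' k : ℕ, ENNReal.ofReal K * ENNReal.ofReal (1/2) ^ m
                * ENNReal.ofReal (Real.exp (-1)) ^ k)
                = (ENNReal.ofReal K * (1 - ENNReal.ofReal (Real.exp (-1)))⁻¹)
                  * ENNReal.ofReal (1/2) ^ m := by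
              intro m
              rw [ENNReal.tsum_mul_left, ENNReal.tsum_geometric]
              ring
            rw [tsum_congr inner, ENNReal.tsum_mul_left, ENNReal.tsum_geometric]
    refine lt_of_le_of_lt hW ?_
    have h1 : (1 - ENNReal.ofReal (1/2))⁻¹ < ⊤ := by
      rw [ENNReal.inv_lt_top, tsub_pos_iff_lt]
      exact ENNReal.ofReal_lt_one.mpr (by norm_num)
    have h2 : (1 - ENNReal.ofReal (Real.exp (-1)))⁻¹ < ⊤ := by
      rw [ENNReal.inv_lt_top, tsub_pos_iff_lt]
      exact ENNReal.ofReal_lt_one.mpr (Real.exp_lt_one_iff.mpr (by norm_num))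
    exact ENNReal.mul_lt_top (ENNReal.mul_lt_top ENNReal.ofReal_lt_top h2) h1
  -- B m is measurable, disjoint family.
  have hBmeas : ∀ m, MeasurableSet (B m) := by
    intro m
    rw [hB]
    exact MeasurableSet.iUnion fun k => MeasurableSet.iUnion fun _ =>
      (hmeas' m k).union (hmeas'' m k)
  have hBdisj : ∀ m m' : ℕ, m ≠ m' → Disjoint (B m) (B m') := by
    intro m m' hne
    rw [Set.disjoint_left]
    intro ω h1 h2
    rw [hB] at h1 h2
    simp only [Set.mem_iUnion] at h1 h2
    obtain ⟨k, hk, hA⟩ := h1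
    obtain ⟨k', hk', hA'⟩ := h2
    have hpairs : (m, k) ≠ (m', k') := by
      intro h; rw [Prod.mk.injEq] at h; exact hne h.1
    rcases hA with h | h <;> rcases hA' with h' | h'
    · exact Set.disjoint_left.mp (hdisj' m k m' k' hpairs) h h'
    · exact Set.disjoint_left.mp (hdisj m k m' k') h h'
    · exact Set.disjoint_left.mp (hdisj m' k' m k).symm h h'
    · exact Set.disjoint_left.mp (hdisj'' m k m' k' hpairs) h h'
  -- integral of X over each block is 0
  have hBint : ∀ m, 1 ≤ m → ∫ x in B m, X x ∂μ = 0 := by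
    intro m hm
    have hBm : B m = ⋃ k, A' m k ∪ A'' m k := by
      rw [hB]
      ext ω
      simp only [Set.mem_iUnion, Set.mem_union]
      constructor
      · rintro ⟨k, _, h⟩; exact ⟨k, h⟩
      · rintro ⟨k, h⟩
        by_cases hk : 2 ≤ k
        · exact ⟨k, hk, h⟩
        · exfalso
          rcases h with h | h
          · rw [hemp' m k (fun hpq => hk hpq.2)] at h; exact h
          · rw [hemp'' m k (fun hpq => hk hpq.2)] at h; exact h
    have hpd : Pairwise (Function.onFun Disjoint fun k => A' m k ∪ A'' m k) := by
      intro k k' hkk'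
      have hpairs : (m, k) ≠ (m, k') := by
        intro h; rw [Prod.mk.injEq] at h; exact hkk' h.2
      refine Set.disjoint_union_left.mpr ⟨?_, ?_⟩
      · exact Set.disjoint_union_right.mpr ⟨hdisj' m k m k' hpairs, hdisj m k m k'⟩
      · exact Set.disjoint_union_right.mpr
          ⟨(hdisj m k' m k).symm, hdisj'' m k m k' hpairs⟩
    rw [hBm, integral_iUnion (fun k => (hmeas' m k).union (hmeas'' m k)) hpd
      hXint.integrableOn]
    have hzero : ∀ k : ℕ, ∫ x in A' m k ∪ A'' m k, X x ∂μ = 0 := by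
      intro k
      by_cases hk : 2 ≤ k
      · rw [setIntegral_union (hdisj m k m k) (hmeas'' m k) hXint.integrableOn
          hXint.integrableOn]
        have e1 : ∫ x in A' m k, X x ∂μ = (μ (A' m k)).toReal • (k : ℝ) := by
          rw [setIntegral_congr_fun (hmeas' m k) (fun ω hω => hX' m k hm hk ω hω),
            setIntegral_const, measureReal_def]
        have e2 : ∫ x in A'' m k, X x ∂μ = (μ (A'' m k)).toReal • (-(k : ℝ)) := by
          rw [setIntegral_congr_fun (hmeas'' m k) (fun ω hω => hX'' m k hm hk ω hω),
            setIntegral_const, measureReal_def]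
        rw [e1, e2, hμ' m k hm hk, hμ'' m k hm hk]
        simp [smul_eq_mul]
      · rw [hemp' m k (fun hpq => hk hpq.2), hemp'' m k (fun hpq => hk hpq.2)]
        simp
    simp_rw [hzero]
    exact tsum_zero
  -- Main part
  intro n hn
  -- the sub-σ-algebra is below m0
  have hCmeas : MeasurableSet (C n) := by
    rw [hC]
    exact MeasurableSet.iUnion fun m => MeasurableSet.iUnion fun _ => hBmeas m
  have hFle : F n ≤ m0 := by
    rw [hF n]
    apply MeasurableSpace.generateFrom_le
    rintro t (⟨m, _, k, _, (rfl | rfl)⟩ | ht)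
    · exact hmeas' m k
    · exact hmeas'' m k
    · rw [Set.mem_singleton_iff] at ht
      rw [ht]
      exact hCmeas.compl
  haveI : SigmaFinite (μ.trim hFle) := by
    have : IsFiniteMeasure (μ.trim hFle) := isFiniteMeasure_trim hFle
    infer_instance
  -- subsets of C n
  have hsub' : ∀ m k, n ≤ m → 2 ≤ k → A' m k ⊆ C n := by
    intro m k hm hk
    rw [hC]
    intro ω hω
    refine Set.mem_iUnion.mpr ⟨m, Set.mem_iUnion.mpr ⟨hm, ?_⟩⟩
    rw [hB]
    exact Set.mem_iUnion.mpr ⟨k, Set.mem_iUnion.mpr ⟨hk, Or.inl hω⟩⟩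
  have hsub'' : ∀ m k, n ≤ m → 2 ≤ k → A'' m k ⊆ C n := by
    intro m k hm hk
    rw [hC]
    intro ω hω
    refine Set.mem_iUnion.mpr ⟨m, Set.mem_iUnion.mpr ⟨hm, ?_⟩⟩
    rw [hB]
    exact Set.mem_iUnion.mpr ⟨k, Set.mem_iUnion.mpr ⟨hk, Or.inr hω⟩⟩
  set g : Ω → ℝ := (C n).indicator X with hg_def
  set h : Ω → ℝ := ((C n)ᶜ).indicator X with hh_def
  have hg_int : Integrable g μ := hXint.indicator hCmeas
  have hh_int : Integrable h μ := hXint.indicator hCmeas.compl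
  -- g is F n measurable
  have hgFmeas : Measurable[F n] g := by
    refine @measurable_of_tendsto_metrizable Ω ℝ (F n) _ _ _ _
      (fun N ω => ∑ b ∈ Finset.Ico n N ×ˢ Finset.range N, term b ω) g ?_ ?_
    · intro N
      apply Finset.measurable_sum
      intro b hb
      have hb1 : n ≤ b.1 := (Finset.mem_Ico.mp (Finset.mem_product.mp hb).1).1
      have hA'm : MeasurableSet[F n] (A' b.1 b.2) := by
        by_cases h2 : 2 ≤ b.2
        · rw [hF n]
          exact MeasurableSpace.measurableSet_generateFrom
            (Or.inl ⟨b.1, hb1, b.2, h2, Or.inl rfl⟩)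
        · rw [hemp' b.1 b.2 (fun hpq => h2 hpq.2)]
          exact @MeasurableSet.empty Ω (F n)
      have hA''m : MeasurableSet[F n] (A'' b.1 b.2) := by
        by_cases h2 : 2 ≤ b.2
        · rw [hF n]
          exact MeasurableSpace.measurableSet_generateFrom
            (Or.inl ⟨b.1, hb1, b.2, h2, Or.inr rfl⟩)
        · rw [hemp'' b.1 b.2 (fun hpq => h2 hpq.2)]
          exact @MeasurableSet.empty Ω (F n)
      exact ((measurable_const.indicator hA'm).add
        (measurable_const.indicator hA''m))
    · rw [tendsto_pi_nhds]
      intro ω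
      by_cases hω : ω ∈ C n
      · have hω' := hω
        rw [hC] at hω'
        simp only [Set.mem_iUnion] at hω'
        obtain ⟨m, hm, hωB⟩ := hω'
        rw [hB] at hωB
        simp only [Set.mem_iUnion] at hωB
        obtain ⟨k, hk, hmem⟩ := hωB
        have hm1 : 1 ≤ m := le_trans hn hm
        have hgω : g ω = X ω := Set.indicator_of_mem hω X
        have hev : ∀ N, max m k < N →
            ∑ b ∈ Finset.Ico n N ×ˢ Finset.range N, term b ω = X ω := by
          intro N hN
          rw [Finset.sum_eq_single (m, k)]
          · exact hterm_eq ω m k hm1 hk hmem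
          · intro b _ hb
            exact hterm_ne ω m k hmem b hb
          · intro hcon
            exact absurd (Finset.mem_product.mpr
              ⟨Finset.mem_Ico.mpr ⟨hm, lt_of_le_of_lt (le_max_left m k) hN⟩,
               Finset.mem_range.mpr (lt_of_le_of_lt (le_max_right m k) hN)⟩) hcon
        rw [hgω]
        refine Tendsto.congr' ?_ (tendsto_const_nhds (x := X ω))
        filter_upwards [eventually_gt_atTop (max m k)] with N hN
        exact (hev N hN).symm
      · have hgω : g ω = 0 := Set.indicator_of_notMem hω X
        have hev : ∀ N, ∑ b ∈ Finset.Ico n N ×ˢ Finset.range N, term b ω = 0 := by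
          intro N
          apply Finset.sum_eq_zero
          intro b hb
          have hb1 : n ≤ b.1 := (Finset.mem_Ico.mp (Finset.mem_product.mp hb).1).1
          have h1 : ω ∉ A' b.1 b.2 := by
            intro hmem
            by_cases h2 : 2 ≤ b.2
            · exact hω (hsub' b.1 b.2 hb1 h2 hmem)
            · rw [hemp' b.1 b.2 (fun hpq => h2 hpq.2)] at hmem; exact hmem
          have h2 : ω ∉ A'' b.1 b.2 := by
            intro hmem
            by_cases h2 : 2 ≤ b.2
            · exact hω (hsub'' b.1 b.2 hb1 h2 hmem)
            · rw [hemp'' b.1 b.2 (fun hpq => h2 hpq.2)] at hmem; exact hmem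
          simp [hterm_def, Set.indicator_of_notMem, h1, h2]
        rw [hgω]
        simp only [hev]
        exact tendsto_const_nhds
  -- complement of C n
  have hB0 : B 0 = ∅ := by
    rw [hB]
    ext ω
    simp only [Set.mem_iUnion, Set.mem_empty_iff_false, iff_false]
    rintro ⟨k, hk, hmem⟩
    rcases hmem with hmem | hmem
    · rw [hemp' 0 k (fun hpq => absurd hpq.1 (by norm_num))] at hmem; exact hmem
    · rw [hemp'' 0 k (fun hpq => absurd hpq.1 (by norm_num))] at hmem; exact hmem
  have hCc : (C n)ᶜ = ⋃ m, (fun m => if m < n then B m else ∅) m := by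
    ext ω
    simp only [Set.mem_compl_iff, Set.mem_iUnion]
    constructor
    · intro hω
      obtain ⟨p, q, hp, hq, hmem⟩ := hrep ω
      have hωB : ω ∈ B p := by
        rw [hB]
        exact Set.mem_iUnion.mpr ⟨q, Set.mem_iUnion.mpr ⟨hq, hmem⟩⟩
      have hpn : p < n := by
        by_contra hcon
        push_neg at hcon
        exact hω (by rw [hC]; exact Set.mem_iUnion.mpr ⟨p, Set.mem_iUnion.mpr ⟨hcon, hωB⟩⟩)
      exact ⟨p, by simp [hpn, hωB]⟩
    · rintro ⟨m, hm⟩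
      by_cases hmn : m < n
      · simp only [if_pos hmn] at hm
        intro hωC
        rw [hC] at hωC
        simp only [Set.mem_iUnion] at hωC
        obtain ⟨m', hm', hωB'⟩ := hωC
        exact Set.disjoint_left.mp (hBdisj m m' (by omega)) hm hωB'
      · simp only [if_neg hmn] at hm
        exact absurd hm (Set.notMem_empty ω)
  have hint_compl : ∫ x in (C n)ᶜ, X x ∂μ = 0 := by
    rw [hCc, integral_iUnion ?_ ?_ hXint.integrableOn]
    · have hzero : ∀ m : ℕ, ∫ x in (if m < n then B m else ∅), X x ∂μ = 0 := by
        intro m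
        by_cases hmn : m < n
        · rw [if_pos hmn]
          rcases Nat.eq_zero_or_pos m with rfl | hm
          · rw [hB0]; simp
          · exact hBint m hm
        · rw [if_neg hmn]; simp
      simp_rw [hzero]
      exact tsum_zero
    · intro m
      by_cases hmn : m < n
      · simpa [hmn] using hBmeas m
      · simp [hmn]
    · intro m m' hne
      simp only [Function.onFun]
      by_cases h1 : m < n <;> by_cases h2 : m' < n <;>
        simp [h1, h2, hBdisj m m' hne]
  have htot : ∫ x, h x ∂μ = 0 := by
    rw [hh_def, integral_indicator hCmeas.compl]
    exact hint_compl
  -- set integrals of h vanish on all F n measurable sets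
  have hP : ∀ s : Set Ω, MeasurableSet[F n] s → ∫ x in s, h x ∂μ = 0 := by
    have hpi : IsPiSystem
        ({S | ∃ m, n ≤ m ∧ ∃ k, 2 ≤ k ∧ (S = A' m k ∨ S = A'' m k)} ∪ {(C n)ᶜ}
          : Set (Set Ω)) := by
      rintro s hs t ht hst
      rcases hs with ⟨m, hm, k, hk, hs⟩ | hs
      · rcases ht with ⟨m', hm', k', hk', ht⟩ | ht
        · -- both A-type
          obtain ⟨ω, hωs, hωt⟩ := hst
          have hseqt : s = t := by
            by_cases hpq : (m, k) = (m', k')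
            · rw [Prod.mk.injEq] at hpq
              obtain ⟨rfl, rfl⟩ := hpq
              rcases hs with rfl | rfl <;> rcases ht with rfl | rfl
              · rfl
              · exact absurd hωt (Set.disjoint_left.mp (hdisj m k m k) hωs)
              · exact absurd hωs (Set.disjoint_left.mp (hdisj m k m k) hωt)
              · rfl
            · exfalso
              rcases hs with rfl | rfl <;> rcases ht with rfl | rfl
              · exact Set.disjoint_left.mp (hdisj' m k m' k' hpq) hωs hωt
              · exact Set.disjoint_left.mp (hdisj m k m' k') hωs hωt
              · exact Set.disjoint_left.mp (hdisj m' k' m k).symm hωs hωt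
              · exact Set.disjoint_left.mp (hdisj'' m k m' k' hpq) hωs hωt
          rw [hseqt, Set.inter_self]
          exact Or.inl ⟨m', hm', k', hk', ht⟩
        · -- t = (C n)ᶜ
          rw [Set.mem_singleton_iff] at ht
          exfalso
          obtain ⟨ω, hωs, hωt⟩ := hst
          rw [ht] at hωt
          have hωC : ω ∈ C n := by
            rcases hs with rfl | rfl
            · exact hsub' m k hm hk hωs
            · exact hsub'' m k hm hk hωs
          exact hωt hωC
      · rw [Set.mem_singleton_iff] at hs
        rcases ht with ⟨m', hm', k', hk', ht⟩ | ht
        · exfalso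
          obtain ⟨ω, hωs, hωt⟩ := hst
          rw [hs] at hωs
          have hωC : ω ∈ C n := by
            rcases ht with rfl | rfl
            · exact hsub' m' k' hm' hk' hωt
            · exact hsub'' m' k' hm' hk' hωt
          exact hωs hωC
        · rw [Set.mem_singleton_iff] at ht
          rw [hs, ht, Set.inter_self]
          exact Or.inr rfl
    refine fun s hs => @MeasurableSpace.induction_on_inter Ω
      (F n) (fun s _ => ∫ x in s, h x ∂μ = 0) _ (hF n) hpi ?_ ?_ ?_ ?_ s hs
    · simp
    · rintro t (⟨m, hm, k, hk, (rfl | rfl)⟩ | ht)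
      · have : ∀ ω ∈ A' m k, h ω = 0 := by
          intro ω hω
          have hnot : ω ∉ (C n)ᶜ := fun hcon => hcon (hsub' m k hm hk hω)
          exact Set.indicator_of_notMem hnot X
        rw [setIntegral_congr_fun (hmeas' m k) this]
        simp
      · have : ∀ ω ∈ A'' m k, h ω = 0 := by
          intro ω hω
          have hnot : ω ∉ (C n)ᶜ := fun hcon => hcon (hsub'' m k hm hk hω)
          exact Set.indicator_of_notMem hnot X
        rw [setIntegral_congr_fun (hmeas'' m k) this]
        simp
      · rw [Set.mem_singleton_iff] at ht
        rw [ht]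
        have : ∀ ω ∈ (C n)ᶜ, h ω = X ω := fun ω hω => Set.indicator_of_mem hω X
        rw [setIntegral_congr_fun hCmeas.compl this]
        exact hint_compl
    · intro t htm h0
      have := integral_add_compl (hFle t htm) hh_int
      rw [h0, zero_add] at this
      rw [this, htot]
    · intro f hdisjf hmeasf h0s
      rw [integral_iUnion (fun i => hFle _ (hmeasf i)) hdisjf hh_int.integrableOn]
      simp_rw [h0s]
      exact tsum_zero
  -- conditional expectation of h is 0
  have hcond0 : (fun _ : Ω => (0 : ℝ)) =ᵐ[μ] μ[h|F n] := by
    refine ae_eq_condExp_of_forall_setIntegral_eq hFle hh_int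
      (fun s _ _ => integrableOn_zero) (fun s hs _ => ?_) ?_
    · rw [integral_zero]
      exact (hP s hs).symm
    · exact ⟨fun _ => 0, @stronglyMeasurable_const Ω ℝ (F n) _ _, EventuallyEq.rfl⟩
  have hcondg : μ[g|F n] = g :=
    condExp_of_stronglyMeasurable hFle hgFmeas.stronglyMeasurable hg_int
  constructor
  · -- conditional expectation part
    have hXgh : X = g + h := by
      rw [hg_def, hh_def]
      exact (Set.indicator_self_add_compl (C n) X).symm
    calc μ[X|F n] = μ[g + h|F n] := by rw [← hXgh]
      _ =ᵐ[μ] μ[g|F n] + μ[h|F n] := condExp_add hg_int hh_int _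
      _ =ᵐ[μ] g + (fun _ => 0) := by
          rw [hcondg]
          exact EventuallyEq.add EventuallyEq.rfl hcond0.symm
      _ = g := by ext ω; simp
  · -- divergence part
    intro l hl
    have ha : (0 : ℝ) < l - 1 := by linarith
    set a : ℝ := l - 1 with ha_def
    have hcn : (0 : ℝ) < c * (1/2) ^ n := by positivity
    set cn : ℝ := c * (1/2) ^ n with hcn_def
    -- eventual lower bound on the series terms
    have htend : Tendsto (fun k : ℕ => Real.exp (a * k) / (k : ℝ) ^ 3) atTop atTop := by
      have h1 : Tendsto (fun k : ℕ => (a * k : ℝ)) atTop atTop :=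
        (tendsto_natCast_atTop_atTop).const_mul_atTop ha
      have h2 : Tendsto (fun k : ℕ => Real.exp (a * k) / (a * k) ^ 3) atTop atTop :=
        (Real.tendsto_exp_div_pow_atTop 3).comp h1
      have h3 := h2.const_mul_atTop (show (0:ℝ) < a ^ 3 by positivity)
      refine h3.congr' ?_
      filter_upwards [eventually_gt_atTop 0] with k hk
      have hk0 : (0 : ℝ) < (k : ℝ) := by exact_mod_cast hk
      field_simp
    have hev : ∀ᶠ k : ℕ in atTop, (k : ℝ) ^ 3 ≤ cn * Real.exp (a * k) := by
      have := htend.eventually_ge_atTop (cn⁻¹)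
      filter_upwards [this, eventually_gt_atTop 0] with k hk hk0
      have hkR : (0 : ℝ) < (k : ℝ) := by exact_mod_cast hk0
      have hk3 : (0 : ℝ) < (k : ℝ) ^ 3 := by positivity
      rw [le_div_iff₀ hk3] at hk
      calc (k : ℝ) ^ 3 = cn * (cn⁻¹ * (k : ℝ) ^ 3) := by field_simp
        _ ≤ cn * Real.exp (a * k) := by
            apply mul_le_mul_of_nonneg_left _ (le_of_lt hcn)
            linarith
    obtain ⟨K0, hK0⟩ := eventually_atTop.mp hev
    set K : ℕ := max K0 2 with hK_def
    -- each term with k ≥ K contributes at least 1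
    have hterm_ge : ∀ k : ℕ, K ≤ k →
        (1 : ℝ≥0∞) ≤ ∫⁻ ω in A' n k, ENNReal.ofReal (Real.exp (l * |g ω|)) ∂μ := by
      intro k hk
      have hk2 : 2 ≤ k := le_trans (le_max_right K0 2) hk
      have hkK0 : K0 ≤ k := le_trans (le_max_left K0 2) hk
      have hkR : (2 : ℝ) ≤ (k : ℝ) := by exact_mod_cast hk2
      have hk0 : (0 : ℝ) < (k : ℝ) := by linarith
      have hlogk : (0 : ℝ) < Real.log k := Real.log_pos (by linarith)
      have hconst : ∀ ω ∈ A' n k,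
          ENNReal.ofReal (Real.exp (l * |g ω|)) = ENNReal.ofReal (Real.exp (l * k)) := by
        intro ω hω
        have hωC : ω ∈ C n := hsub' n k le_rfl hk2 hω
        have : g ω = (k : ℝ) := by
          rw [hg_def, Set.indicator_of_mem hωC, hX' n k hn hk2 ω hω]
        rw [this, abs_of_nonneg (le_of_lt hk0)]
      rw [setLIntegral_congr_fun (hmeas' n k) hconst, setLIntegral_const,
        hμ' n k hn hk2]
      rw [← ENNReal.ofReal_mul (Real.exp_nonneg _), ENNReal.one_le_ofReal]
      have hkl : (0:ℝ) < (k : ℝ) * Real.log k ^ 2 := by positivity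
      have hexp : Real.exp (l * k) * Real.exp (-(k:ℝ)) = Real.exp (a * k) := by
        rw [← Real.exp_add, ha_def]
        congr 1
        ring
      have heq : Real.exp (l * k) * (c * (1 / 2) ^ n * Real.exp (-(k:ℝ))
            / ((k:ℝ) * Real.log k ^ 2))
          = cn * Real.exp (a * k) / ((k:ℝ) * Real.log k ^ 2) := by
        rw [hcn_def, ← hexp]
        ring
      rw [heq, le_div_iff₀ hkl, one_mul]
      have hlogle : Real.log k ≤ (k : ℝ) := by
        have := Real.log_le_sub_one_of_pos hk0
        linarith
      have hkl3 : (k : ℝ) * Real.log k ^ 2 ≤ (k : ℝ) ^ 3 := by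
        have h1 : Real.log k ^ 2 ≤ (k : ℝ) ^ 2 :=
          pow_le_pow_left₀ (le_of_lt hlogk) hlogle 2
        calc (k : ℝ) * Real.log k ^ 2 ≤ (k : ℝ) * (k : ℝ) ^ 2 :=
              mul_le_mul_of_nonneg_left h1 (le_of_lt hk0)
          _ = (k : ℝ) ^ 3 := by ring
      exact le_trans hkl3 (hK0 k hkK0)
    -- put everything together
    rw [← top_le_iff]
    have hUle : ∫⁻ ω in ⋃ k, A' n k, ENNReal.ofReal (Real.exp (l * |g ω|)) ∂μ ≤
        ∫⁻ ω, ENNReal.ofReal (Real.exp (l * |g ω|)) ∂μ :=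
      setLIntegral_le_lintegral _ _
    have hUsum : ∫⁻ ω in ⋃ k, A' n k, ENNReal.ofReal (Real.exp (l * |g ω|)) ∂μ =
        ∑' k : ℕ, ∫⁻ ω in A' n k, ENNReal.ofReal (Real.exp (l * |g ω|)) ∂μ := by
      apply lintegral_iUnion (fun k => hmeas' n k)
      intro k k' hkk'
      exact hdisj' n k n k' (by simp [hkk'])
    have htop : (⊤ : ℝ≥0∞) ≤
        ∑' k : ℕ, ∫⁻ ω in A' n k, ENNReal.ofReal (Real.exp (l * |g ω|)) ∂μ := by
      have h1 : (⊤ : ℝ≥0∞) = ∑' _ : ℕ, (1 : ℝ≥0∞) :=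
        (ENNReal.tsum_const_eq_top_of_ne_zero one_ne_zero).symm
      rw [h1]
      exact Summable.tsum_le_tsum_of_inj (fun i => K + i) (add_right_injective K)
        (fun c _ => zero_le)
        (fun i => hterm_ge (K + i) (Nat.le_add_right K i))
        ENNReal.summable ENNReal.summable
    calc (⊤ : ℝ≥0∞) ≤ ∑' k : ℕ, ∫⁻ ω in A' n k,
          ENNReal.ofReal (Real.exp (l * |g ω|)) ∂μ := htop
      _ = ∫⁻ ω in ⋃ k, A' n k, ENNReal.ofReal (Real.exp (l * |g ω|)) ∂μ := hUsum.symm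
      _ ≤ ∫⁻ ω, ENNReal.ofReal (Real.exp (l * |g ω|)) ∂μ := hUle
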